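/- Let β > 0 and define φ_β : ℝ → ℝ by φ_β(s) = (s⁴ + β⁴)^{1/4} − β for s > 0 and φ_β(s) = 0 for s ≤ 0. Then φ_β is three times continuously differentiable on all of ℝ, and moreover φ_β(s) > 0, φ_β'(s) > 0, and φ_β''(s) > 0 for every s > 0. -/

import Mathlib

open Filter Set

/-- The regularized positive part `φ_β`: `φ_β(s) = (s⁴ + β⁴)^(1/4) − β` for `s > 0`
and `φ_β(s) = 0` for `s ≤ 0`. -/
noncomputable def phiB (β : ℝ) (s : ℝ) : ℝ :=
  if 0 < s then (s ^ 4 + β ^ 4) ^ ((1 : ℝ) / 4) - β else 0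

lemma maxpow_hasDerivAt (j : ℕ) (hj : 1 ≤ j) (x : ℝ) :
    HasDerivAt (fun y : ℝ => (max y 0) ^ (j + 1)) ((j + 1) * (max x 0) ^ j) x := by
  rcases lt_trichotomy x 0 with hx | hx | hx
  · have hmax : max x 0 = 0 := max_eq_right hx.le
    have heq : (fun y : ℝ => (max y 0) ^ (j + 1)) =ᶠ[nhds x] fun _ => (0 : ℝ) := by
      filter_upwards [Iio_mem_nhds hx] with y hy
      simp [max_eq_right (mem_Iio.mp hy).le, Nat.succ_ne_zero]
    have : HasDerivAt (fun _ : ℝ => (0 : ℝ)) 0 x := hasDerivAt_const x 0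
    have h2 := this.congr_of_eventuallyEq heq
    simpa [hmax, zero_pow (by omega : j ≠ 0)] using h2
  · subst hx
    have hmax : max (0 : ℝ) 0 = 0 := by simp
    rw [hasDerivAt_iff_tendsto_slope]
    have key : Tendsto (fun y : ℝ => (max y 0) ^ (j + 1) / (y - 0))
        (nhdsWithin 0 {(0:ℝ)}ᶜ) (nhds 0) := by
      apply squeeze_zero_norm' (a := fun y : ℝ => |y| ^ j)
      · filter_upwards [self_mem_nhdsWithin] with y hy
        have hy' : y ≠ 0 := hy
        have h1 : |max y 0| ≤ |y| := by
          rcases le_or_gt y 0 with h | h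
          · simp [max_eq_right h]
          · simp [max_eq_left h.le]
        have h2 : |(max y 0) ^ (j + 1)| ≤ |y| ^ (j + 1) := by
          rw [abs_pow]
          exact pow_le_pow_left₀ (abs_nonneg _) h1 _
        have hylt : 0 < |y| := abs_pos.mpr hy'
        rw [Real.norm_eq_abs, sub_zero, abs_div]
        rw [div_le_iff₀ hylt]
        calc |(max y 0) ^ (j + 1)| ≤ |y| ^ (j + 1) := h2
          _ = |y| ^ j * |y| := by ring
      · have : Tendsto (fun y : ℝ => |y| ^ j) (nhds 0) (nhds 0) := by
          have := ((continuous_abs.pow j).tendsto (0:ℝ))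
          convert this using 2
          show (0:ℝ) = |(0:ℝ)| ^ j
          simp [zero_pow (by omega : j ≠ 0)]
          rfl
        exact this.mono_left nhdsWithin_le_nhds
    have : ((j:ℝ) + 1) * (max (0:ℝ) 0) ^ j = 0 := by
      simp [zero_pow (by omega : j ≠ 0)]
    rw [this]
    refine key.congr' ?_
    filter_upwards [self_mem_nhdsWithin] with y hy
    simp [slope, hmax, div_eq_inv_mul]
  · have hmax : max x 0 = x := max_eq_left hx.le
    have heq : (fun y : ℝ => (max y 0) ^ (j + 1)) =ᶠ[nhds x] fun y => y ^ (j + 1) := by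
      filter_upwards [Ioi_mem_nhds hx] with y hy
      simp [max_eq_left (mem_Ioi.mp hy).le]
    have h2 := (hasDerivAt_pow (j + 1) x).congr_of_eventuallyEq heq
    simpa [hmax] using h2

lemma contDiff_maxpow4 : ContDiff ℝ 3 (fun x : ℝ => (max x 0) ^ 4) := by
  have d4 : ∀ x : ℝ, HasDerivAt (fun y : ℝ => (max y 0) ^ 4) (4 * (max x 0) ^ 3) x := by
    intro x; have := maxpow_hasDerivAt 3 (by norm_num) x
    norm_num at this; exact this
  have d3 : ∀ x : ℝ, HasDerivAt (fun y : ℝ => 4 * (max y 0) ^ 3) (12 * (max x 0) ^ 2) x := by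
    intro x; have := (maxpow_hasDerivAt 2 (by norm_num) x).const_mul 4
    norm_num at this
    exact this.congr_deriv (by ring)
  have d2 : ∀ x : ℝ, HasDerivAt (fun y : ℝ => 12 * (max y 0) ^ 2) (24 * (max x 0) ^ 1) x := by
    intro x; have := (maxpow_hasDerivAt 1 le_rfl x).const_mul 12
    norm_num at this
    exact this.congr_deriv (by ring)
  have e4 : deriv (fun y : ℝ => (max y 0) ^ 4) = fun x => 4 * (max x 0) ^ 3 :=
    funext fun x => (d4 x).deriv
  have e3 : deriv (fun y : ℝ => 4 * (max y 0) ^ 3) = fun x => 12 * (max x 0) ^ 2 :=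
    funext fun x => (d3 x).deriv
  rw [show (3 : WithTop ℕ∞) = 2 + 1 from rfl, contDiff_succ_iff_deriv]
  refine ⟨fun x => (d4 x).differentiableAt, by simp, ?_⟩
  rw [e4, show (2 : WithTop ℕ∞) = 1 + 1 from rfl, contDiff_succ_iff_deriv]
  refine ⟨fun x => (d3 x).differentiableAt, by simp, ?_⟩
  rw [e3, show (1 : WithTop ℕ∞) = 0 + 1 from rfl, contDiff_succ_iff_deriv]
  refine ⟨fun x => (d2 x).differentiableAt, by simp, ?_⟩
  rw [contDiff_zero]
  have e2 : deriv (fun y : ℝ => 12 * (max y 0) ^ 2) = fun x => 24 * (max x 0) ^ 1 :=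
    funext fun x => (d2 x).deriv
  rw [e2]
  exact continuous_const.mul ((continuous_id.max continuous_const).pow 1)

/-- For `β > 0`, the regularized positive part `φ_β` is three times continuously
differentiable on all of `ℝ`, and `φ_β(s) > 0`, `φ_β'(s) > 0`, `φ_β''(s) > 0` for
every `s > 0`. -/
theorem phiB_contDiff_three_and_derivs_pos (β : ℝ) (hβ : 0 < β) :
    ContDiff ℝ 3 (phiB β) ∧
      ∀ s : ℝ, 0 < s →
        0 < phiB β s ∧ 0 < deriv (phiB β) s ∧ 0 < deriv (deriv (phiB β)) s := by
  have hc0 : (0:ℝ) < β ^ 4 := by positivity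
  have hb14 : (β ^ 4 : ℝ) ^ ((1:ℝ)/4) = β := by
    rw [← Real.rpow_natCast β 4, ← Real.rpow_mul hβ.le]
    norm_num
  -- the smooth extension on `(0, ∞)`
  set f : ℝ → ℝ := fun y => (y ^ 4 + β ^ 4) ^ ((1:ℝ)/4) - β with hfdef
  -- `phiB β` as a composition of `C³` functions
  have hrepr : phiB β =
      (fun y : ℝ => (y + β ^ 4) ^ ((1:ℝ)/4) - β) ∘ (fun x : ℝ => (max x 0) ^ 4) := by
    funext s
    by_cases hs : 0 < s
    · simp [phiB, hs, max_eq_left hs.le, Function.comp]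
    · simp only [phiB, hs, if_false, Function.comp_apply, max_eq_right (not_lt.mp hs)]
      rw [eq_comm, sub_eq_zero]
      simpa using hb14
  have hcd : ContDiff ℝ 3 (phiB β) := by
    rw [hrepr]
    refine contDiff_iff_contDiffAt.mpr fun x => ContDiffAt.comp x ?_ contDiff_maxpow4.contDiffAt
    have hpos : (0:ℝ) < (max x 0) ^ 4 + β ^ 4 := by positivity
    have h1 : ContDiffAt ℝ 3 (fun y : ℝ => (y + β ^ 4) ^ ((1:ℝ)/4)) ((max x 0) ^ 4) := by
      have h2 : ContDiffAt ℝ 3 (fun z : ℝ => z ^ ((1:ℝ)/4)) ((max x 0) ^ 4 + β ^ 4) :=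
        Real.contDiffAt_rpow_const_of_ne (ne_of_gt hpos)
      have h3 : ContDiffAt ℝ 3 (fun y : ℝ => y + β ^ 4) ((max x 0) ^ 4) :=
        contDiffAt_id.add contDiffAt_const
      exact ContDiffAt.comp ((max x 0) ^ 4)
        (g := fun z : ℝ => z ^ ((1:ℝ)/4)) (f := fun y : ℝ => y + β ^ 4) h2 h3
    exact h1.sub contDiffAt_const
  -- derivative of the smooth extension
  set F : ℝ → ℝ := fun y => y ^ 3 * (y ^ 4 + β ^ 4) ^ (-(3:ℝ)/4) with hFdef
  have hfd : ∀ y : ℝ, HasDerivAt f (F y) y := by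
    intro y
    have h0 : (0:ℝ) < y ^ 4 + β ^ 4 := by positivity
    have hu : HasDerivAt (fun y : ℝ => y ^ 4 + β ^ 4) (4 * y ^ 3) y := by
      simpa using (hasDerivAt_pow 4 y).add_const (β ^ 4)
    have h1 := (hu.rpow_const (p := (1:ℝ)/4) (Or.inl (ne_of_gt h0))).sub_const β
    refine h1.congr_deriv ?_
    rw [hFdef, show ((1:ℝ)/4 - 1) = -(3:ℝ)/4 by norm_num]
    ring
  have hEq : ∀ s : ℝ, 0 < s → phiB β =ᶠ[nhds s] f := by
    intro s hs
    filter_upwards [Ioi_mem_nhds hs] with y hy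
    simp [phiB, mem_Ioi.mp hy, hfdef]
  refine ⟨hcd, fun s hs => ?_⟩
  have hX : (0:ℝ) < s ^ 4 + β ^ 4 := by positivity
  refine ⟨?_, ?_, ?_⟩
  · -- value positivity
    have h1 : (β ^ 4 : ℝ) ^ ((1:ℝ)/4) < (s ^ 4 + β ^ 4) ^ ((1:ℝ)/4) :=
      Real.rpow_lt_rpow hc0.le (by nlinarith [pow_pos hs 4]) (by norm_num)
    rw [hb14] at h1
    simpa [phiB, hs] using sub_pos.mpr h1
  · -- first derivative positivity
    have h1 : deriv (phiB β) s = F s := by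
      rw [(hEq s hs).deriv_eq, (hfd s).deriv]
    rw [h1]
    exact mul_pos (by positivity) (Real.rpow_pos_of_pos hX _)
  · -- second derivative positivity
    have hEq' : deriv (phiB β) =ᶠ[nhds s] F := by
      filter_upwards [Ioi_mem_nhds hs] with y hy
      rw [(hEq y (mem_Ioi.mp hy)).deriv_eq, (hfd y).deriv]
    have hu : HasDerivAt (fun y : ℝ => y ^ 4 + β ^ 4) (4 * s ^ 3) s := by
      simpa using (hasDerivAt_pow 4 s).add_const (β ^ 4)
    have h2 : HasDerivAt (fun y : ℝ => (y ^ 4 + β ^ 4) ^ (-(3:ℝ)/4))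
        ((4 * s ^ 3) * (-(3:ℝ)/4) * (s ^ 4 + β ^ 4) ^ (-(3:ℝ)/4 - 1)) s :=
      hu.rpow_const (Or.inl hX.ne')
    have h3 : HasDerivAt F
        ((3 * s ^ 2) * ((s ^ 4 + β ^ 4) ^ (-(3:ℝ)/4)) +
          s ^ 3 * ((4 * s ^ 3) * (-(3:ℝ)/4) * (s ^ 4 + β ^ 4) ^ (-(3:ℝ)/4 - 1))) s := by
      have hp : HasDerivAt (fun y : ℝ => y ^ 3) (3 * s ^ 2) s := by
        simpa using hasDerivAt_pow 3 s
      exact hp.mul h2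
    have h4 : deriv (deriv (phiB β)) s = _ := hEq'.deriv_eq.trans h3.deriv
    rw [h4]
    have hB : (0:ℝ) < (s ^ 4 + β ^ 4) ^ (-(3:ℝ)/4 - 1) := Real.rpow_pos_of_pos hX _
    have hAB : (s ^ 4 + β ^ 4) ^ (-(3:ℝ)/4)
        = (s ^ 4 + β ^ 4) * (s ^ 4 + β ^ 4) ^ (-(3:ℝ)/4 - 1) := by
      have h5 := Real.rpow_add hX 1 (-(3:ℝ)/4 - 1)
      rw [Real.rpow_one] at h5
      rw [← h5]
      norm_num
    rw [hAB]
    have key : (3 * s ^ 2) * ((s ^ 4 + β ^ 4) * (s ^ 4 + β ^ 4) ^ (-(3:ℝ)/4 - 1)) +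
        s ^ 3 * ((4 * s ^ 3) * (-(3:ℝ)/4) * (s ^ 4 + β ^ 4) ^ (-(3:ℝ)/4 - 1))
        = 3 * s ^ 2 * β ^ 4 * (s ^ 4 + β ^ 4) ^ (-(3:ℝ)/4 - 1) := by ring
    rw [key]
    positivity
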